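/- Let K ⊆ ℝⁿ be a simplicial cone, ‖·‖ an absolute norm with respect to K, and S ⊆ π(K) a bounded semigroup containing I with ρ(S) = 1. Then v(x) := sup{‖S |x|_K‖ : S ∈ S} defines a norm on ℝⁿ which is absolute (v(x) = v(|x|_K)) and extremal for S. -/

import Mathlib

open Matrix Set
noncomputable section

variable {n : ℕ}

/-- A proper cone: convex, a cone, pointed, closed, with nonempty interior. -/
def IsProperCone (K : Set (Fin n → ℝ)) : Prop :=
  Convex ℝ K ∧ (∀ (r : ℝ), 0 < r → ∀ x ∈ K, r • x ∈ K) ∧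
    K ∩ (-K) = {0} ∧ IsClosed K ∧ (interior K).Nonempty

/-- A compact base of the cone `K`. -/
def IsCompactBase (K B : Set (Fin n → ℝ)) : Prop :=
  IsCompact B ∧ (0 : Fin n → ℝ) ∉ closure B ∧
    K = {y | ∃ r : ℝ, 0 ≤ r ∧ ∃ x ∈ B, y = r • x}

/-- A face of the cone `K`: a subcone such that `x ∈ F`, `0 ≤_K y ≤_K x` implies `y ∈ F`. -/
def IsFace (K F : Set (Fin n → ℝ)) : Prop :=
  F ⊆ K ∧ (∀ (r : ℝ), 0 < r → ∀ x ∈ F, r • x ∈ F) ∧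
    (∀ x ∈ F, ∀ y ∈ K, x - y ∈ K → y ∈ F)

/-- `A ∈ π(K)`, i.e. `A K ⊆ K`. -/
def MapsCone (A : Matrix (Fin n) (Fin n) ℝ) (K : Set (Fin n → ℝ)) : Prop :=
  ∀ x ∈ K, A.mulVec x ∈ K

/-- `A` is `K`-irreducible: `A ∈ π(K)` and `A` leaves no nontrivial face of `K` invariant. -/
def KIrreducible (K : Set (Fin n → ℝ)) (A : Matrix (Fin n) (Fin n) ℝ) : Prop :=
  MapsCone A K ∧ ∀ F : Set (Fin n → ℝ), IsFace K F → F ≠ {0} → F ≠ K →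
    ¬ (A.mulVec '' F ⊆ F)

/-- Spectral radius: the maximum modulus of complex eigenvalues of a real matrix. -/
def specRad (A : Matrix (Fin n) (Fin n) ℝ) : ℝ :=
  sSup ((fun z : ℂ => ‖z‖) '' spectrum ℂ (A.map (algebraMap ℝ ℂ)))

/-- Operator norm of a matrix induced by the reference norm on `Fin n → ℝ`. -/
def opNorm (A : Matrix (Fin n) (Fin n) ℝ) : ℝ :=
  ‖LinearMap.toContinuousLinearMap A.mulVecLin‖

/-- The set of products of `t` elements of `M` (the time-`t` evolution operators). -/
def ProdSet (M : Set (Matrix (Fin n) (Fin n) ℝ)) : ℕ → Set (Matrix (Fin n) (Fin n) ℝ)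
  | 0 => {1}
  | (t + 1) => {P | ∃ A ∈ M, ∃ Q ∈ ProdSet M t, P = A * Q}

/-- The joint spectral radius of the discrete-time semigroup generated by `M`. -/
def jsr (M : Set (Matrix (Fin n) (Fin n) ℝ)) : ℝ :=
  ⨅ t : {t : ℕ // 0 < t}, (sSup (opNorm '' ProdSet M t.1)) ^ ((t.1 : ℝ)⁻¹)

/-- `N` is a norm on `Fin n → ℝ`. -/
def IsNorm (N : (Fin n → ℝ) → ℝ) : Prop :=
  (∀ x, N x = 0 → x = 0) ∧ (∀ (c : ℝ) (x), N (c • x) = |c| * N x) ∧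
    (∀ x y, N (x + y) ≤ N x + N y)

/-- The operator norm on matrices induced by a vector norm `v`. -/
def vop (v : (Fin n → ℝ) → ℝ) (A : Matrix (Fin n) (Fin n) ℝ) : ℝ :=
  sSup ((fun x => v (A.mulVec x)) '' {x | v x ≤ 1})

/-- The joint spectral radius computed via the matrix norm `vop v`. -/
def jsrWith (v : (Fin n → ℝ) → ℝ) (M : Set (Matrix (Fin n) (Fin n) ℝ)) : ℝ :=
  ⨅ t : {t : ℕ // 0 < t}, (sSup (vop v '' ProdSet M t.1)) ^ ((t.1 : ℝ)⁻¹)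

/-- Hausdorff distance between sets of matrices w.r.t. the matrix norm `ν`. -/
def hausdorffWith (ν : Matrix (Fin n) (Fin n) ℝ → ℝ)
    (M N : Set (Matrix (Fin n) (Fin n) ℝ)) : ℝ :=
  max (sSup ((fun B => sInf ((fun A => ν (A - B)) '' M)) '' N))
      (sSup ((fun A => sInf ((fun B => ν (A - B)) '' N)) '' M))

/-- Eccentricity of a norm `v` relative to the reference norm. -/
def ecc (v : (Fin n → ℝ) → ℝ) : ℝ :=
  sSup (v '' {x : Fin n → ℝ | ‖x‖ = 1}) / sInf (v '' {x : Fin n → ℝ | ‖x‖ = 1})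

/-- `K`-absolute value w.r.t. the simplicial cone generated by the basis `b`. -/
def absK (b : Module.Basis (Fin n) ℝ (Fin n → ℝ)) (x : Fin n → ℝ) : Fin n → ℝ :=
  ∑ i, |b.repr x i| • b i


-- basic norm facts
lemma IsNorm.zero {N : (Fin n → ℝ) → ℝ} (hN : IsNorm N) : N 0 = 0 := by
  have := hN.2.1 0 0
  simpa using this

lemma IsNorm.nonneg {N : (Fin n → ℝ) → ℝ} (hN : IsNorm N) (x : Fin n → ℝ) : 0 ≤ N x := by
  have h := hN.2.2 x (-x)
  have hx : N (-x) = N x := by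
    have := hN.2.1 (-1) x; simpa using this
  have h0 : N (x + -x) = 0 := by simpa using hN.zero
  nlinarith [h, hx, h0]

lemma repr_absK (b : Module.Basis (Fin n) ℝ (Fin n → ℝ)) (x : Fin n → ℝ) (i : Fin n) :
    b.repr (absK b x) i = |b.repr x i| := by
  have := b.repr_sum_self (fun i => |b.repr x i|)
  have := congrFun this i
  simpa [absK] using this

lemma absK_mem (b : Module.Basis (Fin n) ℝ (Fin n → ℝ)) (x : Fin n → ℝ) (i : Fin n) :
    0 ≤ b.repr (absK b x) i := by rw [repr_absK]; positivity

-- monotonicity of absolute norms in coordinates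
lemma mono_of_abs (b : Module.Basis (Fin n) ℝ (Fin n → ℝ)) (N : (Fin n → ℝ) → ℝ)
    (hN : IsNorm N) (habs : ∀ x, N x = N (absK b x)) :
    ∀ y z : Fin n → ℝ, (∀ i, 0 ≤ b.repr y i) → (∀ i, b.repr y i ≤ b.repr z i) →
      N y ≤ N z := by
  set M : (Fin n → ℝ) → ℝ := fun f => N (∑ i, f i • b i) with hM
  have key : ∀ c e : Fin n → ℝ, (∀ i, 0 ≤ c i) → (∀ i, c i ≤ e i) → M c ≤ M e := by
    have Mabs : ∀ f : Fin n → ℝ, M f = M (fun i => |f i|) := by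
      intro f
      have h1 : absK b (∑ i, f i • b i) = ∑ i, |f i| • b i := by
        unfold absK
        congr 1
        ext i
        rw [congrFun (b.repr_sum_self f) i]
      simp only [hM]
      rw [habs (∑ i, f i • b i), h1]
    have Madd : ∀ f g : Fin n → ℝ, M (f + g) ≤ M f + M g := by
      intro f g
      simp only [hM]
      have : (∑ i, (f + g) i • b i) = (∑ i, f i • b i) + (∑ i, g i • b i) := by
        rw [← Finset.sum_add_distrib]; congr 1; ext i; simp [add_smul, add_mul]
      rw [this]; exact hN.2.2 _ _
    have Msmul : ∀ (t : ℝ) (f : Fin n → ℝ), M (t • f) = |t| * M f := by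
      intro t f
      simp only [hM]
      have : (∑ i, (t • f) i • b i) = t • ∑ i, f i • b i := by
        rw [Finset.smul_sum]; congr 1; ext i; simp [smul_smul, mul_assoc]
      rw [this]; exact hN.2.1 t _
    -- one-step decrease
    have step : ∀ (e : Fin n → ℝ) (j : Fin n) (a : ℝ), 0 ≤ a → a ≤ e j →
        M (Function.update e j a) ≤ M e := by
      intro e j a ha hae
      rcases eq_or_lt_of_le (ha.trans hae) with h0 | h0
      · have : a = e j := le_antisymm hae (by linarith [h0.symm ▸ ha])
        rw [this, Function.update_eq_self]
      · set t : ℝ := a / e j with ht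
        have ht0 : 0 ≤ t := div_nonneg ha h0.le
        have ht1 : t ≤ 1 := (div_le_one h0).2 hae
        set e' : Fin n → ℝ := Function.update e j (-(e j)) with he'
        have hdecomp : Function.update e j a = ((1+t)/2) • e + ((1-t)/2) • e' := by
          funext i
          rcases eq_or_ne i j with hij | hij
          · rw [hij]
            simp only [Function.update_self, he', Pi.add_apply, Pi.smul_apply,
              Function.update_self, smul_eq_mul]
            have htej : t * e j = a := div_mul_cancel₀ a (ne_of_gt h0)
            linear_combination -htej
          · simp only [Function.update_of_ne hij, he', Pi.add_apply, Pi.smul_apply,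
              Function.update_of_ne hij, smul_eq_mul]
            ring
        have hMe' : M e' = M e := by
          rw [Mabs e', Mabs e]
          congr 1
          funext i
          rcases eq_or_ne i j with hij | hij
          · rw [hij]; simp [he']
          · simp [he', Function.update_of_ne hij]
        calc M (Function.update e j a) ≤ M (((1+t)/2) • e) + M (((1-t)/2) • e') := by
              rw [hdecomp]; exact Madd _ _
          _ = ((1+t)/2) * M e + ((1-t)/2) * M e := by
              rw [Msmul, Msmul, hMe', abs_of_nonneg (by linarith), abs_of_nonneg (by linarith)]
          _ = M e := by ring
    -- induction on the number of changed coordinates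
    have P : ∀ k : ℕ, ∀ c e : Fin n → ℝ, (∀ i, 0 ≤ c i) → (∀ i, c i ≤ e i) →
        (∀ i : Fin n, k ≤ (i : ℕ) → c i = e i) → M c ≤ M e := by
      intro k
      induction k with
      | zero =>
        intro c e _ _ hag
        have : c = e := funext fun i => hag i (Nat.zero_le _)
        rw [this]
      | succ k ih =>
        intro c e hc hce hag
        by_cases hk : k < n
        · set j : Fin n := ⟨k, hk⟩ with hj
          set c' : Fin n → ℝ := Function.update c j (e j) with hc'def
          have hupd : Function.update c' j (c j) = c := by
            rw [hc'def, Function.update_idem, Function.update_eq_self]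
          have h1 : M c ≤ M c' := by
            have := step c' j (c j) (hc j) (by rw [hc'def, Function.update_self]; exact hce j)
            rwa [hupd] at this
          have h2 : M c' ≤ M e := by
            apply ih
            · intro i
              rcases eq_or_ne i j with hij | hij
              · rw [hij, hc'def, Function.update_self]; exact (hc j).trans (hce j)
              · rw [hc'def, Function.update_of_ne hij]; exact hc i
            · intro i
              rcases eq_or_ne i j with hij | hij
              · rw [hij, hc'def, Function.update_self]
              · rw [hc'def, Function.update_of_ne hij]; exact hce i
            · intro i hi
              rcases eq_or_ne i j with hij | hij
              · rw [hij, hc'def, Function.update_self]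
              · rw [hc'def, Function.update_of_ne hij]
                apply hag
                rcases Nat.lt_or_ge (i : ℕ) (k+1) with h | h
                · exfalso
                  have : (i : ℕ) = k := Nat.le_antisymm (Nat.lt_succ_iff.1 h) hi
                  exact hij (Fin.ext this)
                · exact h
          exact h1.trans h2
        · apply ih c e hc hce
          intro i hi
          exact absurd (lt_of_le_of_lt hi i.isLt) (by omega)
    intro c e hc hce
    exact P n c e hc hce (fun i hi => absurd (lt_of_le_of_lt hi i.isLt) (lt_irrefl _))
  intro y z hy hyz
  have h1 : y = ∑ i, b.repr y i • b i := (b.sum_repr y).symm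
  have h2 : z = ∑ i, b.repr z i • b i := (b.sum_repr z).symm
  have := key (fun i => b.repr y i) (fun i => b.repr z i) hy hyz
  simp only [hM] at this
  rwa [← h1, ← h2] at this

lemma absK_idem (b : Module.Basis (Fin n) ℝ (Fin n → ℝ)) (x : Fin n → ℝ) :
    absK b (absK b x) = absK b x := by
  unfold absK
  refine Finset.sum_congr rfl fun i _ => ?_
  rw [show b.repr (∑ i, |b.repr x i| • b i) i = |b.repr x i| from
    congrFun (b.repr_sum_self fun i => |b.repr x i|) i, abs_abs]

lemma absK_smul (b : Module.Basis (Fin n) ℝ (Fin n → ℝ)) (c : ℝ) (x : Fin n → ℝ) :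
    absK b (c • x) = |c| • absK b x := by
  unfold absK
  rw [Finset.smul_sum]
  refine Finset.sum_congr rfl fun i _ => ?_
  have h : (b.repr (c • x)) i = c * b.repr x i := by simp
  rw [h, abs_mul, mul_smul]

lemma exists_bound (N : (Fin n → ℝ) → ℝ) (hN : IsNorm N) :
    ∃ L : ℝ, 0 ≤ L ∧ ∀ w : Fin n → ℝ, N w ≤ L * ‖w‖ := by
  classical
  set L := ∑ i : Fin n, N (fun j => if i = j then (1 : ℝ) else 0) with hLdef
  have hL0 : 0 ≤ L := Finset.sum_nonneg fun i _ => hN.nonneg _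
  refine ⟨L, hL0, fun w => ?_⟩
  calc N w = N (∑ i, w i • (fun j => if i = j then (1 : ℝ) else 0)) := by
        rw [← pi_eq_sum_univ w]
    _ ≤ ∑ i, N (w i • (fun j => if i = j then (1 : ℝ) else 0)) :=
        Finset.le_sum_of_subadditive N hN.zero.le hN.2.2 _ _
    _ = ∑ i, |w i| * N (fun j => if i = j then (1 : ℝ) else 0) :=
        Finset.sum_congr rfl fun i _ => hN.2.1 _ _
    _ ≤ ∑ i, ‖w‖ * N (fun j => if i = j then (1 : ℝ) else 0) :=
        Finset.sum_le_sum fun i _ => mul_le_mul_of_nonneg_right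
          (by simpa [Real.norm_eq_abs] using norm_le_pi_norm w i) (hN.nonneg _)
    _ = L * ‖w‖ := by rw [← Finset.mul_sum, mul_comm]

lemma mulVec_norm_le (A : Matrix (Fin n) (Fin n) ℝ) (u : Fin n → ℝ) :
    ‖A.mulVec u‖ ≤ opNorm A * ‖u‖ := by
  have h : A.mulVec u = (LinearMap.toContinuousLinearMap A.mulVecLin) u := by
    simp [LinearMap.coe_toContinuousLinearMap']
  rw [h]
  exact (LinearMap.toContinuousLinearMap A.mulVecLin).le_opNorm u

lemma basis_mem_cone (b : Module.Basis (Fin n) ℝ (Fin n → ℝ)) (j i : Fin n) :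
    0 ≤ b.repr (b j) i := by
  rw [Module.Basis.repr_self, Finsupp.single_apply]
  split <;> norm_num

lemma repr_mulVec_absK_le (b : Module.Basis (Fin n) ℝ (Fin n → ℝ))
    (K : Set (Fin n → ℝ)) (hKdef : K = {x | ∀ i, 0 ≤ b.repr x i})
    (A : Matrix (Fin n) (Fin n) ℝ) (hA : MapsCone A K) (x : Fin n → ℝ) (i : Fin n) :
    |b.repr (A.mulVec x) i| ≤ b.repr (A.mulVec (absK b x)) i := by
  have hm : ∀ j, 0 ≤ b.repr (A.mulVec (b j)) i := by
    intro j
    have hbj : b j ∈ K := by rw [hKdef]; exact fun i => basis_mem_cone b j i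
    have := hA (b j) hbj
    rw [hKdef] at this
    exact this i
  have hAx : b.repr (A.mulVec x) i = ∑ j, b.repr x j * b.repr (A.mulVec (b j)) i := by
    conv_lhs => rw [← b.sum_repr x]
    simp only [← Matrix.mulVecLin_apply, map_sum, LinearMap.map_smul, map_smulₛₗ,
      RingHom.id_apply, Finsupp.coe_finset_sum, Finset.sum_apply, Finsupp.coe_smul,
      Pi.smul_apply, smul_eq_mul]
  have hAa : b.repr (A.mulVec (absK b x)) i
      = ∑ j, |b.repr x j| * b.repr (A.mulVec (b j)) i := by
    unfold absK
    simp only [← Matrix.mulVecLin_apply, map_sum, LinearMap.map_smul, map_smulₛₗ,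
      RingHom.id_apply, Finsupp.coe_finset_sum, Finset.sum_apply, Finsupp.coe_smul,
      Pi.smul_apply, smul_eq_mul]
  rw [hAx, hAa]
  calc |∑ j, b.repr x j * b.repr (A.mulVec (b j)) i|
      ≤ ∑ j, |b.repr x j * b.repr (A.mulVec (b j)) i| := Finset.abs_sum_le_sum_abs _ _
    _ = ∑ j, |b.repr x j| * b.repr (A.mulVec (b j)) i := by
        refine Finset.sum_congr rfl fun j _ => ?_
        rw [abs_mul, abs_of_nonneg (hm j)]

lemma key_mono (b : Module.Basis (Fin n) ℝ (Fin n → ℝ))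
    (K : Set (Fin n → ℝ)) (hKdef : K = {x | ∀ i, 0 ≤ b.repr x i})
    (N : (Fin n → ℝ) → ℝ) (hN : IsNorm N) (habs : ∀ x, N x = N (absK b x))
    (A : Matrix (Fin n) (Fin n) ℝ) (hA : MapsCone A K) (u w : Fin n → ℝ)
    (hu : ∀ i, 0 ≤ b.repr u i) (huw : ∀ i, b.repr u i ≤ b.repr w i) :
    N (A.mulVec u) ≤ N (A.mulVec w) := by
  have hu' : u ∈ K := by rw [hKdef]; exact hu
  have hwu : w - u ∈ K := by
    rw [hKdef]; intro i; rw [map_sub]; simp only [Finsupp.coe_sub, Pi.sub_apply]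
    linarith [huw i]
  have h1 : A.mulVec u ∈ K := hA u hu'
  have h2 : A.mulVec (w - u) ∈ K := hA _ hwu
  rw [hKdef] at h1 h2
  apply mono_of_abs b N hN habs
  · exact h1
  · intro i
    have := h2 i
    rw [Matrix.mulVec_sub, map_sub] at this
    simp only [Finsupp.coe_sub, Pi.sub_apply] at this
    linarith

lemma sSup_const_mul {s : Set ℝ} (hne : s.Nonempty) (hbdd : BddAbove s)
    {c : ℝ} (hc : 0 ≤ c) : sSup ((fun r => c * r) '' s) = c * sSup s := by
  rcases eq_or_lt_of_le hc with h0 | h0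
  · rw [← h0]
    have : (fun r => (0 : ℝ) * r) '' s = {0} := by
      rw [show (fun r => (0:ℝ) * r) = fun _ => (0:ℝ) by funext r; ring]
      exact hne.image_const 0
    rw [this, csSup_singleton, zero_mul]
  · have hbdd' : BddAbove ((fun r => c * r) '' s) := by
      obtain ⟨B, hB⟩ := hbdd
      refine ⟨c * B, ?_⟩
      rintro _ ⟨r, hr, rfl⟩
      exact mul_le_mul_of_nonneg_left (hB hr) hc
    apply le_antisymm
    · apply csSup_le (hne.image _)
      rintro _ ⟨r, hr, rfl⟩
      exact mul_le_mul_of_nonneg_left (le_csSup hbdd hr) hc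
    · rw [mul_comm, ← le_div_iff₀ h0]
      apply csSup_le hne
      intro r hr
      rw [le_div_iff₀ h0, mul_comm]
      exact le_csSup hbdd' ⟨r, hr, rfl⟩

/-- for a simplicial cone `K` (generated by a basis `b`), an
absolute norm `N`, and a bounded semigroup `S ⊆ π(K)` with `I ∈ S`,
`v x = sup {N (S |x|_K) : S ∈ S}` is an absolute extremal norm. -/
theorem stmt12 (b : Module.Basis (Fin n) ℝ (Fin n → ℝ))
    (K : Set (Fin n → ℝ)) (hKdef : K = {x | ∀ i, 0 ≤ b.repr x i})
    (N : (Fin n → ℝ) → ℝ) (hN : IsNorm N) (habs : ∀ x, N x = N (absK b x))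
    (S : Set (Matrix (Fin n) (Fin n) ℝ))
    (hsg : ∀ A ∈ S, ∀ B ∈ S, A * B ∈ S) (hI : (1 : Matrix (Fin n) (Fin n) ℝ) ∈ S)
    (hπ : ∀ A ∈ S, MapsCone A K) (hbd : ∃ C : ℝ, ∀ A ∈ S, opNorm A ≤ C)
    (v : (Fin n → ℝ) → ℝ)
    (hv : ∀ x, v x = sSup ((fun A => N (A.mulVec (absK b x))) '' S)) :
    IsNorm v ∧ (∀ x, v x = v (absK b x)) ∧
      ∀ A ∈ S, ∀ x, v (A.mulVec x) ≤ v x := by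
  obtain ⟨C, hC⟩ := hbd
  obtain ⟨L, hL0, hL⟩ := exists_bound N hN
  have hSne : S.Nonempty := ⟨1, hI⟩
  have hbdd : ∀ u : Fin n → ℝ, BddAbove ((fun A => N (A.mulVec u)) '' S) := by
    intro u
    refine ⟨L * (C * ‖u‖), ?_⟩
    rintro _ ⟨A, hA, rfl⟩
    calc N (A.mulVec u) ≤ L * ‖A.mulVec u‖ := hL _
      _ ≤ L * (C * ‖u‖) := by
          refine mul_le_mul_of_nonneg_left ?_ hL0
          calc ‖A.mulVec u‖ ≤ opNorm A * ‖u‖ := mulVec_norm_le A u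
            _ ≤ C * ‖u‖ := mul_le_mul_of_nonneg_right (hC A hA) (norm_nonneg u)
  have hne : ∀ u : Fin n → ℝ, ((fun A => N (A.mulVec u)) '' S).Nonempty :=
    fun u => hSne.image _
  have hel : ∀ x : Fin n → ℝ, ∀ A ∈ S, N (A.mulVec (absK b x)) ≤ v x := by
    intro x A hA
    rw [hv]
    exact le_csSup (hbdd _) ⟨A, hA, rfl⟩
  refine ⟨⟨?_, ?_, ?_⟩, ?_, ?_⟩
  · -- definiteness
    intro x hx
    have h1 : N (absK b x) ≤ v x := by
      have := hel x 1 hI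
      rwa [Matrix.one_mulVec] at this
    have h2 : N (absK b x) = 0 := le_antisymm (hx ▸ h1) (hN.nonneg _)
    have h3 : absK b x = 0 := hN.1 _ h2
    have h4 : ∀ i, b.repr x i = 0 := by
      intro i
      have := repr_absK b x i
      rw [h3, map_zero] at this
      simpa using this.symm
    calc x = ∑ i, b.repr x i • b i := (b.sum_repr x).symm
      _ = 0 := by simp [h4]
  · -- homogeneity
    intro c x
    rw [hv (c • x), hv x]
    have h1 : (fun A : Matrix (Fin n) (Fin n) ℝ => N (A.mulVec (absK b (c • x))))
        = (fun r => |c| * r) ∘ (fun A => N (A.mulVec (absK b x))) := by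
      funext A
      simp only [Function.comp_apply]
      rw [absK_smul, Matrix.mulVec_smul, hN.2.1, abs_abs]
    rw [h1, Set.image_comp]
    exact sSup_const_mul (hne _) (hbdd _) (abs_nonneg c)
  · -- triangle inequality
    intro x y
    rw [hv (x + y)]
    apply csSup_le (hne _)
    rintro _ ⟨A, hA, rfl⟩
    have h1 : N (A.mulVec (absK b (x + y))) ≤ N (A.mulVec (absK b x + absK b y)) := by
      apply key_mono b K hKdef N hN habs A (hπ A hA)
      · exact absK_mem b (x + y)
      · intro i
        rw [repr_absK, map_add, map_add]
        simp only [Finsupp.coe_add, Pi.add_apply]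
        rw [repr_absK, repr_absK]
        exact abs_add_le _ _
    have h2 : N (A.mulVec (absK b x + absK b y))
        ≤ N (A.mulVec (absK b x)) + N (A.mulVec (absK b y)) := by
      rw [Matrix.mulVec_add]
      exact hN.2.2 _ _
    have h3 := hel x A hA
    have h4 := hel y A hA
    linarith
  · -- absoluteness
    intro x
    rw [hv x, hv (absK b x), absK_idem]
  · -- extremality
    intro A hA x
    rw [hv (A.mulVec x)]
    apply csSup_le (hne _)
    rintro _ ⟨B, hB, rfl⟩
    have h1 : N (B.mulVec (absK b (A.mulVec x))) ≤ N (B.mulVec (A.mulVec (absK b x))) := by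
      apply key_mono b K hKdef N hN habs B (hπ B hB)
      · exact absK_mem b (A.mulVec x)
      · intro i
        rw [repr_absK]
        exact repr_mulVec_absK_le b K hKdef A (hπ A hA) x i
    have h2 : N (B.mulVec (A.mulVec (absK b x))) ≤ v x := by
      rw [Matrix.mulVec_mulVec]
      exact hel x (B * A) (hsg B hB A hA)
    linarith
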